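/- The set of full-rank free K(t)⁻-submodules of K(t)ⁿ, ordered by inclusion, is a modular lattice in which meet is intersection and join is sum, and L ↦ deg L (= deg det of any basis matrix) is a valuation: deg L + deg M = deg(L ∩ M) + deg(L + M), and L ⊊ M implies deg L < deg M. -/

import Mathlib

set_option maxHeartbeats 1000000
set_option synthInstance.maxHeartbeats 1000000

/-- The valuation ring `K(t)⁻` of proper rational functions, i.e. those of degree `≤ 0`. -/
noncomputable def properSubring (K : Type*) [Field K] : Subring (RatFunc K) where
  carrier := {f | f.intDegree ≤ 0}
  zero_mem' := by simp [Set.mem_setOf_eq, RatFunc.intDegree_zero]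
  one_mem' := by simp [Set.mem_setOf_eq, RatFunc.intDegree_one]
  add_mem' := by
    intro a b ha hb
    simp only [Set.mem_setOf_eq] at *
    rcases eq_or_ne (a + b) 0 with h | h
    · simp [h, RatFunc.intDegree_zero]
    rcases eq_or_ne b 0 with hb0 | hb0
    · simpa [hb0] using ha
    · exact le_trans (RatFunc.intDegree_add_le hb0 h) (max_le ha hb)
  neg_mem' := by
    intro a ha
    simpa only [Set.mem_setOf_eq, RatFunc.intDegree_neg] using ha
  mul_mem' := by
    intro a b ha hb
    simp only [Set.mem_setOf_eq] at *
    rcases eq_or_ne a 0 with h | h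
    · simp [h, RatFunc.intDegree_zero]
    rcases eq_or_ne b 0 with h' | h'
    · simp [h', RatFunc.intDegree_zero]
    · rw [RatFunc.intDegree_mul h h']; omega

namespace FFP
variable {K : Type*} [Field K]

theorem mem_proper {f : RatFunc K} : f ∈ properSubring K ↔ f.intDegree ≤ 0 := Iff.rfl

theorem intDegree_inv (f : RatFunc K) : f⁻¹.intDegree = -f.intDegree := by
  rcases eq_or_ne f 0 with h | h
  · simp [h, RatFunc.intDegree_zero]
  · have h2 := RatFunc.intDegree_mul (inv_ne_zero h) h
    rw [inv_mul_cancel₀ h, RatFunc.intDegree_one] at h2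
    omega

theorem intDegree_pow (f : RatFunc K) (hf : f ≠ 0) (n : ℕ) :
    (f ^ n).intDegree = n * f.intDegree := by
  induction n with
  | zero => simp [RatFunc.intDegree_one]
  | succ n ih =>
    rw [pow_succ, RatFunc.intDegree_mul (pow_ne_zero _ hf) hf, ih]
    push_cast; ring

theorem isUnit_iff {u : properSubring K} :
    IsUnit u ↔ (u : RatFunc K) ≠ 0 ∧ (u : RatFunc K).intDegree = 0 := by
  constructor
  · rintro ⟨⟨a, b, hab, -⟩, rfl⟩
    have h1 : (a : RatFunc K) * b = 1 := by exact_mod_cast congrArg Subtype.val hab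
    have ha : (a : RatFunc K) ≠ 0 := left_ne_zero_of_mul (h1 ▸ one_ne_zero)
    have hb : (b : RatFunc K) ≠ 0 := right_ne_zero_of_mul (h1 ▸ one_ne_zero)
    have h2 := RatFunc.intDegree_mul ha hb
    rw [h1, RatFunc.intDegree_one] at h2
    have h3 : (a : RatFunc K).intDegree ≤ 0 := a.2
    have h4 : (b : RatFunc K).intDegree ≤ 0 := b.2
    refine ⟨ha, ?_⟩
    show (a : RatFunc K).intDegree = 0
    omega
  · rintro ⟨h0, hdeg⟩
    refine ⟨⟨u, ⟨(u : RatFunc K)⁻¹, ?_⟩, ?_, ?_⟩, rfl⟩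
    · rw [mem_proper, intDegree_inv, hdeg]; norm_num
    · exact Subtype.ext (mul_inv_cancel₀ h0)
    · exact Subtype.ext (inv_mul_cancel₀ h0)

noncomputable instance : IsDiscreteValuationRing (properSubring K) := by
  apply IsDiscreteValuationRing.ofHasUnitMulPowIrreducibleFactorization
  have hX : (RatFunc.X : RatFunc K) ≠ 0 := RatFunc.X_ne_zero
  have hXi : (RatFunc.X : RatFunc K)⁻¹ ≠ 0 := inv_ne_zero hX
  have hdXi : (RatFunc.X : RatFunc K)⁻¹.intDegree = -1 := by
    rw [intDegree_inv, RatFunc.intDegree_X]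
  refine ⟨⟨(RatFunc.X : RatFunc K)⁻¹, by rw [mem_proper, hdXi]; omega⟩, ⟨?_, ?_⟩, ?_⟩
  · rw [isUnit_iff]; push_neg; intro _; rw [hdXi]; omega
  · rintro a b hab
    have h1 : (RatFunc.X : RatFunc K)⁻¹ = a * b := congrArg Subtype.val hab
    have ha : (a : RatFunc K) ≠ 0 := fun h => hXi (by rw [h1, h, zero_mul])
    have hb : (b : RatFunc K) ≠ 0 := fun h => hXi (by rw [h1, h, mul_zero])
    have h2 := RatFunc.intDegree_mul ha hb
    rw [← h1, hdXi] at h2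
    have h3 : (a : RatFunc K).intDegree ≤ 0 := a.2
    have h4 : (b : RatFunc K).intDegree ≤ 0 := b.2
    rcases eq_or_lt_of_le h3 with h | h
    · exact Or.inl (isUnit_iff.2 ⟨ha, h.symm ▸ rfl⟩)
    · exact Or.inr (isUnit_iff.2 ⟨hb, by omega⟩)
  · intro x hx
    have hx0 : (x : RatFunc K) ≠ 0 := fun h => hx (Subtype.ext h)
    have hxd : (x : RatFunc K).intDegree ≤ 0 := x.2
    set n : ℕ := (-(x : RatFunc K).intDegree).toNat with hn
    have hnn : (n : ℤ) = -(x : RatFunc K).intDegree := Int.toNat_of_nonneg (by omega)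
    refine ⟨n, ?_⟩
    have hu : (x : RatFunc K) * RatFunc.X ^ n ∈ properSubring K := by
      rw [mem_proper, RatFunc.intDegree_mul hx0 (pow_ne_zero _ hX),
        intDegree_pow _ hX, RatFunc.intDegree_X]
      omega
    refine ⟨(isUnit_iff.2 ⟨?_, ?_⟩ : IsUnit (⟨_, hu⟩ : properSubring K)).unit, ?_⟩
    · exact mul_ne_zero hx0 (pow_ne_zero _ hX)
    · rw [RatFunc.intDegree_mul hx0 (pow_ne_zero _ hX), intDegree_pow _ hX,
        RatFunc.intDegree_X]
      omega
    · apply Subtype.ext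
      push_cast [IsUnit.unit_spec, SubmonoidClass.coe_pow]
      show ((RatFunc.X : RatFunc K)⁻¹) ^ n * ((x : RatFunc K) * RatFunc.X ^ n) = (x : RatFunc K)
      rw [inv_pow]
      field_simp

end FFP

/-- The full-rank free `K(t)⁻`-submodule `⟨P⟩ = {Pλ : λ ∈ (K(t)⁻)ⁿ}` of `K(t)ⁿ` spanned by
the columns of a matrix `P`. -/
noncomputable def spanCols {K : Type*} [Field K] {n : ℕ}
    (P : Matrix (Fin n) (Fin n) (RatFunc K)) :
    Submodule (properSubring K) (Fin n → RatFunc K) :=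
  Submodule.span (properSubring K) (Set.range fun j => fun i => P i j)

/-- A full-rank free `K(t)⁻`-submodule of `K(t)ⁿ`: one of the form `⟨P⟩` for a
nonsingular matrix `P` over `K(t)`. -/
def IsFullFree {K : Type*} [Field K] {n : ℕ}
    (M : Submodule (properSubring K) (Fin n → RatFunc K)) : Prop :=
  ∃ P : Matrix (Fin n) (Fin n) (RatFunc K), P.det ≠ 0 ∧ M = spanCols P

/-- `deg L := deg det P` for a full-rank free submodule `L = ⟨P⟩`. -/
noncomputable def degMod {K : Type*} [Field K] {n : ℕ}
    (M : Submodule (properSubring K) (Fin n → RatFunc K)) : ℤ := by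
  classical exact if h : IsFullFree M then (Classical.choose h).det.intDegree else 0

namespace FFP2
variable {K : Type*} [Field K] {n : ℕ}
open Matrix FFP


open Matrix

theorem mem_spanCols {P : Matrix (Fin n) (Fin n) (RatFunc K)} {v : Fin n → RatFunc K} :
    v ∈ spanCols P ↔
      ∃ c : Fin n → properSubring K, P.mulVec (fun j => (c j : RatFunc K)) = v := by
  rw [spanCols, Submodule.mem_span_range_iff_exists_fun]
  have key : ∀ c : Fin n → properSubring K,
      (∑ j, c j • fun i => P i j) = P.mulVec (fun j => (c j : RatFunc K)) := by
    intro c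
    funext i
    rw [Finset.sum_apply]
    show ∑ j, (c j : RatFunc K) * P i j = ∑ j, P i j * (c j : RatFunc K)
    exact Finset.sum_congr rfl fun j _ => mul_comm _ _
  constructor
  · rintro ⟨c, hc⟩; exact ⟨c, (key c).symm.trans hc⟩
  · rintro ⟨c, hc⟩; exact ⟨c, (key c).trans hc⟩

theorem mem_spanCols_inv {P : Matrix (Fin n) (Fin n) (RatFunc K)} (hP : P.det ≠ 0)
    {v : Fin n → RatFunc K} :
    v ∈ spanCols P ↔ ∀ j, P⁻¹.mulVec v j ∈ properSubring K := by
  have hP' : IsUnit P.det := isUnit_iff_ne_zero.2 hP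
  constructor
  · rintro hv j
    obtain ⟨c, rfl⟩ := mem_spanCols.1 hv
    rw [mulVec_mulVec, nonsing_inv_mul _ hP', one_mulVec]
    exact (c j).2
  · intro h
    refine mem_spanCols.2 ⟨fun j => ⟨P⁻¹.mulVec v j, h j⟩, ?_⟩
    show P.mulVec (P⁻¹.mulVec v) = v
    rw [mulVec_mulVec, mul_nonsing_inv _ hP', one_mulVec]

theorem col_mem_spanCols {P : Matrix (Fin n) (Fin n) (RatFunc K)} (j : Fin n) :
    (fun i => P i j) ∈ spanCols P :=
  Submodule.subset_span ⟨j, rfl⟩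

theorem spanCols_le_of_factor {P Q A : Matrix (Fin n) (Fin n) (RatFunc K)}
    (hA : ∀ i j, A i j ∈ properSubring K) (hPQA : P = Q * A) :
    spanCols P ≤ spanCols Q := by
  rw [spanCols, Submodule.span_le]
  rintro - ⟨j, rfl⟩
  refine mem_spanCols.2 ⟨fun k => ⟨A k j, hA k j⟩, ?_⟩
  funext i
  show ∑ k, Q i k * A k j = P i j
  rw [hPQA]
  rfl

theorem exists_factor {P Q : Matrix (Fin n) (Fin n) (RatFunc K)} (hQ : Q.det ≠ 0)
    (h : spanCols P ≤ spanCols Q) :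
    ∃ A : Matrix (Fin n) (Fin n) (RatFunc K),
      (∀ i j, A i j ∈ properSubring K) ∧ P = Q * A := by
  refine ⟨Q⁻¹ * P, fun k j => ?_, ?_⟩
  · have := (mem_spanCols_inv hQ).1 (h (col_mem_spanCols j)) k
    simpa [Matrix.mul_apply, Matrix.mulVec, dotProduct] using this
  · rw [← Matrix.mul_assoc, mul_nonsing_inv _ (isUnit_iff_ne_zero.2 hQ), Matrix.one_mul]

theorem det_mem {A : Matrix (Fin n) (Fin n) (RatFunc K)}
    (hA : ∀ i j, A i j ∈ properSubring K) : A.det ∈ properSubring K := by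
  have : A = (Matrix.of fun i j => (⟨A i j, hA i j⟩ : properSubring K)).map
      (properSubring K).subtype := by
    funext i j; rfl
  rw [this, ← RingHom.mapMatrix_apply, ← RingHom.map_det]
  exact ((Matrix.of fun i j => (⟨A i j, hA i j⟩ : properSubring K)).det).2

theorem deg_well_defined {P Q : Matrix (Fin n) (Fin n) (RatFunc K)} (hP : P.det ≠ 0)
    (hQ : Q.det ≠ 0) (h : spanCols P = spanCols Q) :
    P.det.intDegree = Q.det.intDegree := by
  obtain ⟨A, hA, hPA⟩ := exists_factor hQ h.le
  obtain ⟨B, hB, hQB⟩ := exists_factor hP h.ge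
  have hdP : P.det = Q.det * A.det := by rw [hPA, det_mul]
  have hdQ : Q.det = P.det * B.det := by rw [hQB, det_mul]
  have hABdet : A.det * B.det = 1 := by
    have : P.det * (B.det * A.det) = P.det * 1 := by
      rw [mul_one]; nth_rewrite 2 [hdP]; rw [hdQ]; ring
    have := mul_left_cancel₀ hP this
    linear_combination this
  have hAne : A.det ≠ 0 := left_ne_zero_of_mul (hABdet ▸ one_ne_zero)
  have hu : IsUnit (⟨A.det, det_mem hA⟩ : properSubring K) := by
    refine IsUnit.of_mul_eq_one ⟨B.det, det_mem hB⟩ (Subtype.ext ?_)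
    exact hABdet
  have hdegA : A.det.intDegree = 0 := (isUnit_iff.1 hu).2
  rw [hdP, RatFunc.intDegree_mul hQ hAne, hdegA, add_zero]

theorem degMod_spanCols {P : Matrix (Fin n) (Fin n) (RatFunc K)} (hP : P.det ≠ 0) :
    degMod (spanCols P) = P.det.intDegree := by
  have h : IsFullFree (spanCols P) := ⟨P, hP, rfl⟩
  rw [degMod, dif_pos h]
  obtain ⟨h1, h2⟩ := Classical.choose_spec h
  exact deg_well_defined h1 hP h2.symm

end FFP2

namespace FFP3
variable {K : Type*} [Field K] {n : ℕ}
open Matrix FFP FFP2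

theorem exists_clear {ι : Type*} [Fintype ι] (f : ι → RatFunc K) :
    ∃ c : RatFunc K, c ≠ 0 ∧ c ∈ properSubring K ∧ ∀ i, c * f i ∈ properSubring K := by
  classical
  set N : ℕ := Finset.univ.sup fun i => (f i).intDegree.toNat with hN
  have hX : (RatFunc.X : RatFunc K) ≠ 0 := RatFunc.X_ne_zero
  have hXi : (RatFunc.X : RatFunc K)⁻¹ ≠ 0 := inv_ne_zero hX
  have hdeg : ((RatFunc.X : RatFunc K)⁻¹ ^ N).intDegree = -(N : ℤ) := by
    rw [intDegree_pow _ hXi, intDegree_inv, RatFunc.intDegree_X]; ring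
  refine ⟨(RatFunc.X : RatFunc K)⁻¹ ^ N, pow_ne_zero _ hXi, ?_, ?_⟩
  · rw [mem_proper, hdeg]; omega
  · intro i
    rcases eq_or_ne (f i) 0 with h | h
    · rw [h, mul_zero]; exact (properSubring K).zero_mem
    · rw [mem_proper, RatFunc.intDegree_mul (pow_ne_zero _ hXi) h, hdeg]
      have h2 : (f i).intDegree.toNat ≤ N :=
        Finset.le_sup (f := fun i => (f i).intDegree.toNat) (Finset.mem_univ i)
      have h1 : (f i).intDegree ≤ ((f i).intDegree.toNat : ℤ) := Int.self_le_toNat _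
      have h3 : (((f i).intDegree.toNat : ℕ) : ℤ) ≤ (N : ℤ) := by exact_mod_cast h2
      omega

noncomputable def psi (K : Type*) [Field K] (n : ℕ) (c : RatFunc K) :
    (Fin n → properSubring K) →ₗ[properSubring K] (Fin n → RatFunc K) where
  toFun x := fun i => c⁻¹ * (x i : RatFunc K)
  map_add' x y := by
    funext i
    show c⁻¹ * ((x i + y i : properSubring K) : RatFunc K) =
      c⁻¹ * (x i : RatFunc K) + c⁻¹ * (y i : RatFunc K)
    push_cast; ring
  map_smul' r x := by
    funext i
    show c⁻¹ * ((r * x i : properSubring K) : RatFunc K) =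
      (r : RatFunc K) * (c⁻¹ * (x i : RatFunc K))
    push_cast; ring

theorem psi_inj {c : RatFunc K} (hc : c ≠ 0) : Function.Injective (psi K n c) := by
  intro x y h
  funext i
  have h1 : c⁻¹ * (x i : RatFunc K) = c⁻¹ * (y i : RatFunc K) := congrFun h i
  exact Subtype.ext (mul_left_cancel₀ (inv_ne_zero hc) h1)

theorem mem_range_psi {c : RatFunc K} (hc : c ≠ 0) {v : Fin n → RatFunc K}
    (h : ∀ i, c * v i ∈ properSubring K) : v ∈ LinearMap.range (psi K n c) := by
  refine ⟨fun i => ⟨c * v i, h i⟩, ?_⟩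
  funext i
  show c⁻¹ * (c * v i) = v i
  field_simp

theorem linearIndependent_lift {ι : Type*} [Fintype ι] {v : ι → Fin n → RatFunc K}
    (h : LinearIndependent (properSubring K) v) : LinearIndependent (RatFunc K) v := by
  rw [linearIndependent_iff'] at h ⊢
  intro s g hg i hi
  obtain ⟨c, hc0, -, hcR⟩ := exists_clear g
  have key : ∑ j ∈ s, (⟨c * g j, hcR j⟩ : properSubring K) • v j = 0 := by
    have h2 : ∑ j ∈ s, (⟨c * g j, hcR j⟩ : properSubring K) • v j
        = c • ∑ j ∈ s, g j • v j := by
      rw [Finset.smul_sum]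
      refine Finset.sum_congr rfl fun j hj => ?_
      funext k
      show (c * g j) * v j k = c * (g j * v j k)
      ring
    rw [h2, hg, smul_zero]
  have h3 := h s (fun j => ⟨c * g j, hcR j⟩) key i hi
  have h4 : c * g i = 0 := congrArg Subtype.val h3
  rcases mul_eq_zero.1 h4 with h5 | h5
  · exact absurd h5 hc0
  · exact h5

theorem span_top_of_det_ne_zero {P : Matrix (Fin n) (Fin n) (RatFunc K)} (hP : P.det ≠ 0) :
    Submodule.span (RatFunc K) (Set.range fun j => fun i => P i j) = ⊤ := by
  rw [eq_top_iff]
  rintro v -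
  rw [Submodule.mem_span_range_iff_exists_fun]
  refine ⟨P⁻¹.mulVec v, ?_⟩
  have h1 : P.mulVec (P⁻¹.mulVec v) = v := by
    rw [mulVec_mulVec, mul_nonsing_inv _ (isUnit_iff_ne_zero.2 hP), one_mulVec]
  funext i
  rw [Finset.sum_apply]
  show ∑ j, P⁻¹.mulVec v j * P i j = v i
  rw [show (∑ j, P⁻¹.mulVec v j * P i j) = P.mulVec (P⁻¹.mulVec v) i from
    Finset.sum_congr rfl fun j _ => mul_comm _ _, h1]

theorem card_eq_of_basis {m : ℕ} {u : Fin m → Fin n → RatFunc K}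
    (hind : LinearIndependent (RatFunc K) u)
    (hspan : Submodule.span (RatFunc K) (Set.range u) = ⊤) : m = n := by
  have b : Module.Basis (Fin m) (RatFunc K) (Fin n → RatFunc K) := Module.Basis.mk hind (le_of_eq hspan.symm)
  have h1 := Module.finrank_eq_card_basis b
  simpa [Module.finrank_pi] using h1.symm

theorem det_ne_zero_of_indep {u : Fin n → Fin n → RatFunc K}
    (hind : LinearIndependent (RatFunc K) u) :
    (Matrix.of fun i j => u j i).det ≠ 0 := by
  intro hdet
  obtain ⟨x, hx, hx0⟩ := Matrix.exists_mulVec_eq_zero_iff.2 hdet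
  refine hx ?_
  have key : ∑ j, x j • u j = 0 := by
    funext k
    rw [Finset.sum_apply]
    have h1 : (Matrix.of fun i j => u j i).mulVec x k = 0 := congrFun hx0 k
    show ∑ j, x j * u j k = 0
    rw [show (∑ j, x j * u j k) = (Matrix.of fun i j => u j i).mulVec x k from
      Finset.sum_congr rfl fun j _ => mul_comm _ _, h1]
  exact funext (Fintype.linearIndependent_iff.1 hind x key)

theorem span_R_le_span_F {s : Set (Fin n → RatFunc K)} {x : Fin n → RatFunc K}
    (h : x ∈ Submodule.span (properSubring K) s) : x ∈ Submodule.span (RatFunc K) s := by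
  induction h using Submodule.span_induction with
  | mem y hy => exact Submodule.subset_span hy
  | zero => exact Submodule.zero_mem _
  | add y z _ _ hy hz => exact Submodule.add_mem _ hy hz
  | smul r y _ hy =>
    have h2 : r • y = (r : RatFunc K) • y := rfl
    rw [h2]
    exact Submodule.smul_mem _ _ hy

theorem nested_smith {P Q : Matrix (Fin n) (Fin n) (RatFunc K)} (hP : P.det ≠ 0)
    (hQ : Q.det ≠ 0) (hle : spanCols Q ≤ spanCols P) :
    ∃ (B : Matrix (Fin n) (Fin n) (RatFunc K)) (d : Fin n → RatFunc K),
      B.det ≠ 0 ∧ (∀ j, d j ≠ 0) ∧ spanCols P = spanCols B ∧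
      spanCols Q = spanCols (B * Matrix.diagonal d) := by
  classical
  obtain ⟨c, hc0, hcR, hc⟩ := exists_clear
    (fun p : (Fin n × Fin n) ⊕ (Fin n × Fin n) =>
      Sum.elim (fun q => P q.1 q.2) (fun q => Q q.1 q.2) p)
  have hcP : ∀ i j, c * P i j ∈ properSubring K := fun i j => hc (Sum.inl (i, j))
  have hcQ : ∀ i j, c * Q i j ∈ properSubring K := fun i j => hc (Sum.inr (i, j))
  set ψ := psi K n c with hψ
  have hrange : ∀ (W : Matrix (Fin n) (Fin n) (RatFunc K)),
      (∀ i j, c * W i j ∈ properSubring K) → spanCols W ≤ LinearMap.range ψ := by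
    intro W hW
    rw [spanCols, Submodule.span_le]
    rintro - ⟨j, rfl⟩
    exact mem_range_psi hc0 (fun i => hW i j)
  have hOr := hrange P hcP
  have hNr := hrange Q hcQ
  set O' := (spanCols P).comap ψ with hO'
  set N' := (spanCols Q).comap ψ with hN'
  obtain ⟨nn, o, hno, bO, bN, a, snf⟩ :=
    Submodule.exists_smith_normal_form_of_le (Pi.basisFun (properSubring K) (Fin n)) N' O'
      (Submodule.comap_mono hle)
  have hmapO : Submodule.map ψ O' = spanCols P := by
    rw [hO', Submodule.map_comap_eq, inf_eq_right.2 hOr]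
  have hmapN : Submodule.map ψ N' = spanCols Q := by
    rw [hN', Submodule.map_comap_eq, inf_eq_right.2 hNr]
  have spanW : ∀ (T : Submodule (properSubring K) (Fin n → properSubring K))
      (m : ℕ) (bT : Module.Basis (Fin m) (properSubring K) T),
      Submodule.map ψ T = Submodule.span (properSubring K)
        (Set.range fun j => ψ ((bT j : Fin n → properSubring K))) := by
    intro T m bT
    conv_lhs => rw [← Submodule.map_subtype_top T, ← Module.Basis.span_eq bT]
    rw [Submodule.map_span, Submodule.map_span, ← Set.range_comp, ← Set.range_comp]
    rfl
  set u : Fin o → Fin n → RatFunc K := fun j => ψ ((bO j : Fin n → properSubring K)) with hu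
  set w : Fin nn → Fin n → RatFunc K := fun j => ψ ((bN j : Fin n → properSubring K)) with hw0
  have spanO : spanCols P = Submodule.span (properSubring K) (Set.range u) := by
    rw [← hmapO, spanW O' o bO]
  have spanN : spanCols Q = Submodule.span (properSubring K) (Set.range w) := by
    rw [← hmapN, spanW N' nn bN]
  have hindR : ∀ (T : Submodule (properSubring K) (Fin n → properSubring K))
      (m : ℕ) (bT : Module.Basis (Fin m) (properSubring K) T),
      LinearIndependent (RatFunc K) (fun j => ψ ((bT j : Fin n → properSubring K))) := by
    intro T m bT
    apply linearIndependent_lift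
    have h1 : LinearIndependent (properSubring K)
        (fun j => ((bT j : Fin n → properSubring K))) :=
      bT.linearIndependent.map' T.subtype (Submodule.ker_subtype T)
    exact h1.map' ψ (LinearMap.ker_eq_bot.2 (psi_inj hc0))
  have hindO : LinearIndependent (RatFunc K) u := hindR O' o bO
  have hindN : LinearIndependent (RatFunc K) w := hindR N' nn bN
  have hspanF : ∀ (W : Matrix (Fin n) (Fin n) (RatFunc K)) (hW : W.det ≠ 0)
      (m : ℕ) (v : Fin m → Fin n → RatFunc K),
      spanCols W = Submodule.span (properSubring K) (Set.range v) →
      Submodule.span (RatFunc K) (Set.range v) = ⊤ := by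
    intro W hW m v hspan
    rw [eq_top_iff, ← span_top_of_det_ne_zero hW, Submodule.span_le]
    rintro - ⟨j, rfl⟩
    have h1 : (fun i => W i j) ∈ spanCols W := col_mem_spanCols j
    rw [hspan] at h1
    exact span_R_le_span_F h1
  have ho : o = n := card_eq_of_basis hindO (hspanF P hP o u spanO)
  subst ho
  have hnn : nn = o := card_eq_of_basis hindN (hspanF Q hQ nn w spanN)
  subst hnn
  set B := Matrix.of fun i j => u j i with hB
  have hBdet : B.det ≠ 0 := det_ne_zero_of_indep hindO
  have hBspan : spanCols B = Submodule.span (properSubring K) (Set.range u) := rfl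
  refine ⟨B, fun j => (a j : RatFunc K), hBdet, ?_, by rw [spanO, hBspan], ?_⟩
  · intro j h0
    have ha0 : a j = 0 := Subtype.ext h0
    refine bN.ne_zero j (Subtype.ext ?_)
    rw [snf j, ha0, zero_smul]
    rfl
  · have hwj : ∀ j, w j = (a j : RatFunc K) • u j := by
      intro j
      have h1 := snf j
      have hcast : Fin.castLE hno j = j := Fin.ext rfl
      rw [hcast] at h1
      show ψ _ = _
      rw [h1, LinearMap.map_smul]
      rfl
    rw [spanN, spanCols]
    have hsets : (Set.range fun j => fun i => (B * Matrix.diagonal fun j' => (a j' : RatFunc K)) i j)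
        = Set.range w := by
      have : (fun j => fun i => (B * Matrix.diagonal fun j' => (a j' : RatFunc K)) i j) = w := by
        funext j
        rw [hwj j]
        funext i
        rw [Matrix.mul_diagonal]
        show B i j * (a j : RatFunc K) = (a j : RatFunc K) * u j i
        rw [mul_comm]
        rfl
      rw [this]
    rw [hsets]

theorem spanCols_smul_congr {P₁ P₂ : Matrix (Fin n) (Fin n) (RatFunc K)} (a : RatFunc K)
    (hP₁ : P₁.det ≠ 0) (hP₂ : P₂.det ≠ 0)
    (h : spanCols P₁ = spanCols P₂) : spanCols (a • P₁) = spanCols (a • P₂) := by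
  apply le_antisymm
  · obtain ⟨A, hA, hfac⟩ := exists_factor hP₂ h.le
    exact spanCols_le_of_factor hA (by rw [hfac, smul_mul_assoc])
  · obtain ⟨A, hA, hfac⟩ := exists_factor hP₁ h.ge
    exact spanCols_le_of_factor hA (by rw [hfac, smul_mul_assoc])

theorem adapted {L M : Submodule (properSubring K) (Fin n → RatFunc K)}
    (hL : IsFullFree L) (hM : IsFullFree M) :
    ∃ (B : Matrix (Fin n) (Fin n) (RatFunc K)) (e : Fin n → RatFunc K),
      B.det ≠ 0 ∧ (∀ j, e j ≠ 0) ∧ L = spanCols B ∧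
      M = spanCols (B * Matrix.diagonal e) := by
  obtain ⟨P, hP, rfl⟩ := hL
  obtain ⟨Q, hQ, rfl⟩ := hM
  obtain ⟨c, hc0, hcR, hc⟩ := exists_clear (fun p : Fin n × Fin n => (P⁻¹ * Q) p.1 p.2)
  have hQ' : (c • Q).det ≠ 0 := by
    rw [det_smul]; exact mul_ne_zero (pow_ne_zero _ hc0) hQ
  have hfac : c • Q = P * (c • (P⁻¹ * Q)) := by
    rw [Matrix.mul_smul, ← Matrix.mul_assoc, mul_nonsing_inv _ (isUnit_iff_ne_zero.2 hP),
      Matrix.one_mul]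
  have hle : spanCols (c • Q) ≤ spanCols P :=
    spanCols_le_of_factor (fun i j => by simpa using hc (i, j)) hfac
  obtain ⟨B, d, hB, hd, hPB, hQB⟩ := nested_smith hP hQ' hle
  refine ⟨B, fun j => c⁻¹ * d j, hB, fun j => mul_ne_zero (inv_ne_zero hc0) (hd j), hPB, ?_⟩
  have h1 : spanCols (c⁻¹ • (c • Q)) = spanCols (c⁻¹ • (B * Matrix.diagonal d)) :=
    spanCols_smul_congr c⁻¹ hQ'
      (by rw [det_mul, det_diagonal]
          exact mul_ne_zero hB (Finset.prod_ne_zero_iff.2 fun j _ => hd j)) hQB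
  have h2 : c⁻¹ • (c • Q) = Q := by rw [smul_smul, inv_mul_cancel₀ hc0, one_smul]
  have h3 : c⁻¹ • (B * Matrix.diagonal d) = B * Matrix.diagonal (fun j => c⁻¹ * d j) := by
    rw [show (Matrix.diagonal fun j => c⁻¹ * d j) = Matrix.diagonal (c⁻¹ • d) from rfl,
      Matrix.diagonal_smul, Matrix.mul_smul]
  rw [h2, h3] at h1
  exact h1

end FFP3

namespace FFP4
variable {K : Type*} [Field K] {n : ℕ}
open Matrix FFP FFP2 FFP3

theorem intDegree_prod {ι : Type*} (s : Finset ι) (f : ι → RatFunc K)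
    (hf : ∀ i ∈ s, f i ≠ 0) : (∏ i ∈ s, f i).intDegree = ∑ i ∈ s, (f i).intDegree := by
  classical
  induction s using Finset.cons_induction with
  | empty => simp [RatFunc.intDegree_one]
  | cons i s his ih =>
    rw [Finset.prod_cons, Finset.sum_cons,
      RatFunc.intDegree_mul (hf i (Finset.mem_cons_self i s))
        (Finset.prod_ne_zero_iff.2 fun j hj => hf j (Finset.mem_cons_of_mem hj)),
      ih fun j hj => hf j (Finset.mem_cons_of_mem hj)]

theorem diag_inv {e : Fin n → RatFunc K} (he : ∀ j, e j ≠ 0) :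
    (Matrix.diagonal e)⁻¹ = Matrix.diagonal fun j => (e j)⁻¹ := by
  apply Matrix.inv_eq_right_inv
  rw [diagonal_mul_diagonal]
  rw [show (fun j => e j * (e j)⁻¹) = fun _ => (1 : RatFunc K) from
    funext fun j => mul_inv_cancel₀ (he j), Matrix.diagonal_one]

theorem inv_mul_diag_mulVec {B : Matrix (Fin n) (Fin n) (RatFunc K)}
    {e : Fin n → RatFunc K} (he : ∀ j, e j ≠ 0) (v : Fin n → RatFunc K) (j : Fin n) :
    (B * Matrix.diagonal e)⁻¹.mulVec v j = (e j)⁻¹ * B⁻¹.mulVec v j := by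
  rw [Matrix.mul_inv_rev, diag_inv he, ← Matrix.mulVec_mulVec, Matrix.mulVec_diagonal]

theorem scalar_inf {x ε γ : RatFunc K} (hε : ε ≠ 0)
    (hγ : γ = if ε.intDegree ≤ 0 then ε else 1) :
    (x ∈ properSubring K ∧ ε⁻¹ * x ∈ properSubring K) ↔ γ⁻¹ * x ∈ properSubring K := by
  by_cases hd : ε.intDegree ≤ 0
  · rw [hγ, if_pos hd]
    constructor
    · exact fun hx => hx.2
    · intro hx
      refine ⟨?_, hx⟩
      have h1 : x = ε * (ε⁻¹ * x) := by field_simp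
      rw [h1]
      exact mul_mem (mem_proper.2 hd) hx
  · rw [hγ, if_neg hd, inv_one, one_mul]
    constructor
    · exact fun hx => hx.1
    · intro hx
      refine ⟨hx, ?_⟩
      have hεinv : ε⁻¹ ∈ properSubring K := by rw [mem_proper, intDegree_inv]; omega
      exact mul_mem hεinv hx

end FFP4

open Matrix FFP FFP2 FFP3 FFP4 in
/-- The full-rank free `K(t)⁻`-submodules of `K(t)ⁿ` form a modular lattice under inclusion,
where meet is intersection and join is sum, and `deg` is a valuation on it:
`deg L + deg M = deg (L ∩ M) + deg (L + M)`, and `L ⊊ M` implies `deg L < deg M`. -/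
theorem fullFree_modular_lattice_valuation {K : Type*} [Field K] {n : ℕ}
    (L M : Submodule (properSubring K) (Fin n → RatFunc K))
    (hL : IsFullFree L) (hM : IsFullFree M) :
    IsFullFree (L ⊓ M) ∧ IsFullFree (L ⊔ M) ∧
    ((L ⊓ M : Submodule (properSubring K) (Fin n → RatFunc K)) : Set (Fin n → RatFunc K)) =
      (L : Set (Fin n → RatFunc K)) ∩ (M : Set (Fin n → RatFunc K)) ∧
    ((L ⊔ M : Submodule (properSubring K) (Fin n → RatFunc K)) : Set (Fin n → RatFunc K)) =
      {v | ∃ a ∈ L, ∃ b ∈ M, a + b = v} ∧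
    degMod L + degMod M = degMod (L ⊓ M) + degMod (L ⊔ M) ∧
    (L < M → degMod L < degMod M) ∧
    (∀ N : Submodule (properSubring K) (Fin n → RatFunc K),
      IsFullFree N → L ≤ N → L ⊔ (M ⊓ N) = (L ⊔ M) ⊓ N) := by
  classical
  obtain ⟨B, e, hB, he, hLB, hMB⟩ := adapted hL hM
  set g : Fin n → RatFunc K := fun j => if (e j).intDegree ≤ 0 then e j else 1 with hg
  set h : Fin n → RatFunc K := fun j => if (e j).intDegree ≤ 0 then 1 else e j with hh
  have hg0 : ∀ j, g j ≠ 0 := fun j => by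
    by_cases hj : (e j).intDegree ≤ 0 <;> simp [hg, hj, he j]
  have hh0 : ∀ j, h j ≠ 0 := fun j => by
    by_cases hj : (e j).intDegree ≤ 0 <;> simp [hh, hj, he j]
  have hdeg_ghe : ∀ j, (g j).intDegree + (h j).intDegree = (e j).intDegree := fun j => by
    by_cases hj : (e j).intDegree ≤ 0 <;> simp [hg, hh, hj, RatFunc.intDegree_one]
  have hdetBe : (B * Matrix.diagonal e).det ≠ 0 := by
    rw [det_mul, det_diagonal]
    exact mul_ne_zero hB (Finset.prod_ne_zero_iff.2 fun j _ => he j)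
  have hdetBg : (B * Matrix.diagonal g).det ≠ 0 := by
    rw [det_mul, det_diagonal]
    exact mul_ne_zero hB (Finset.prod_ne_zero_iff.2 fun j _ => hg0 j)
  have hdetBh : (B * Matrix.diagonal h).det ≠ 0 := by
    rw [det_mul, det_diagonal]
    exact mul_ne_zero hB (Finset.prod_ne_zero_iff.2 fun j _ => hh0 j)
  -- the intersection
  have hinf : spanCols B ⊓ spanCols (B * Matrix.diagonal e) = spanCols (B * Matrix.diagonal g) := by
    ext v
    rw [Submodule.mem_inf, mem_spanCols_inv hB, mem_spanCols_inv hdetBe, mem_spanCols_inv hdetBg]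
    simp only [inv_mul_diag_mulVec he, inv_mul_diag_mulVec hg0]
    constructor
    · rintro ⟨h1, h2⟩ j
      exact (scalar_inf (he j) rfl).1 ⟨h1 j, h2 j⟩
    · intro h1
      exact ⟨fun j => ((scalar_inf (he j) rfl).2 (h1 j)).1,
        fun j => ((scalar_inf (he j) rfl).2 (h1 j)).2⟩
  -- the sum
  have hsup : spanCols B ⊔ spanCols (B * Matrix.diagonal e) = spanCols (B * Matrix.diagonal h) := by
    have hhinv : ∀ j, (h j)⁻¹ ∈ properSubring K := fun j => by
      by_cases hj : (e j).intDegree ≤ 0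
      · simp only [hh, if_pos hj, inv_one]
        exact one_mem _
      · simp only [hh, if_neg hj]
        rw [mem_proper, intDegree_inv]
        omega
    apply le_antisymm
    · refine sup_le ?_ ?_
      · refine spanCols_le_of_factor (A := Matrix.diagonal fun j => (h j)⁻¹) ?_ ?_
        · intro i j
          rw [Matrix.diagonal_apply]
          split
          · next heq => exact heq ▸ hhinv i
          · exact zero_mem _
        · rw [Matrix.mul_assoc, diagonal_mul_diagonal,
            show (fun j => h j * (h j)⁻¹) = fun _ => (1 : RatFunc K) from
              funext fun j => mul_inv_cancel₀ (hh0 j), Matrix.diagonal_one, Matrix.mul_one]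
      · refine spanCols_le_of_factor (A := Matrix.diagonal fun j => (h j)⁻¹ * e j) ?_ ?_
        · intro i j
          rw [Matrix.diagonal_apply]
          split
          · next heq =>
            subst heq
            by_cases hj : (e i).intDegree ≤ 0
            · simp only [hh, if_pos hj, inv_one, one_mul]
              exact mem_proper.2 hj
            · simp only [hh, if_neg hj]
              rw [inv_mul_cancel₀ (he i)]
              exact one_mem _
          · exact zero_mem _
        · rw [Matrix.mul_assoc, diagonal_mul_diagonal,
            show (fun j => h j * ((h j)⁻¹ * e j)) = e from
              funext fun j => by rw [← mul_assoc, mul_inv_cancel₀ (hh0 j), one_mul]]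
    · rw [show spanCols (B * Matrix.diagonal h) = Submodule.span (properSubring K)
        (Set.range fun j => fun i => (B * Matrix.diagonal h) i j) from rfl, Submodule.span_le]
      rintro - ⟨j, rfl⟩
      by_cases hj : (e j).intDegree ≤ 0
      · apply Submodule.mem_sup_left
        have hcol : (fun i => (B * Matrix.diagonal h) i j) = fun i => B i j := by
          funext i
          rw [Matrix.mul_diagonal]
          simp [hh, hj]
        show (fun i => (B * Matrix.diagonal h) i j) ∈ spanCols B
        rw [hcol]
        exact col_mem_spanCols j
      · apply Submodule.mem_sup_right
        have hcol : (fun i => (B * Matrix.diagonal h) i j)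
            = fun i => (B * Matrix.diagonal e) i j := by
          funext i
          rw [Matrix.mul_diagonal, Matrix.mul_diagonal]
          simp [hh, hj]
        show (fun i => (B * Matrix.diagonal h) i j) ∈ spanCols (B * Matrix.diagonal e)
        rw [hcol]
        exact col_mem_spanCols j
  have hdeg_diag : ∀ (w : Fin n → RatFunc K), (∀ j, w j ≠ 0) →
      degMod (spanCols (B * Matrix.diagonal w))
        = B.det.intDegree + ∑ j, (w j).intDegree := by
    intro w hw
    have hdw : (B * Matrix.diagonal w).det ≠ 0 := by
      rw [det_mul, det_diagonal]
      exact mul_ne_zero hB (Finset.prod_ne_zero_iff.2 fun j _ => hw j)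
    rw [degMod_spanCols hdw, det_mul, det_diagonal,
      RatFunc.intDegree_mul hB (Finset.prod_ne_zero_iff.2 fun j _ => hw j),
      intDegree_prod _ _ fun j _ => hw j]
  refine ⟨?_, ?_, ?_, ?_, ?_, ?_, ?_⟩
  · exact ⟨B * Matrix.diagonal g, hdetBg, by rw [hLB, hMB, hinf]⟩
  · exact ⟨B * Matrix.diagonal h, hdetBh, by rw [hLB, hMB, hsup]⟩
  · rfl
  · exact Set.ext fun v => Submodule.mem_sup
  · rw [hLB, hMB, hinf, hsup, degMod_spanCols hB, hdeg_diag e he, hdeg_diag g hg0,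
      hdeg_diag h hh0]
    have hsum : ∑ j, (e j).intDegree
        = ∑ j, (g j).intDegree + ∑ j, (h j).intDegree := by
      rw [← Finset.sum_add_distrib]
      exact Finset.sum_congr rfl fun j _ => (hdeg_ghe j).symm
    omega
  · intro hlt
    have hLM : spanCols B ≤ spanCols (B * Matrix.diagonal e) := by
      rw [← hLB, ← hMB]; exact hlt.le
    have hepos : ∀ j, 0 ≤ (e j).intDegree := by
      intro j
      have hcol := (mem_spanCols_inv hdetBe).1 (hLM (col_mem_spanCols j)) j
      rw [inv_mul_diag_mulVec he] at hcol
      have hBB : B⁻¹.mulVec (fun i => B i j) j = (B⁻¹ * B) j j := rfl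
      rw [hBB, nonsing_inv_mul _ (isUnit_iff_ne_zero.2 hB), Matrix.one_apply_eq, mul_one,
        mem_proper, intDegree_inv] at hcol
      omega
    rw [hLB, hMB, degMod_spanCols hB, hdeg_diag e he]
    have hne : ∑ j, (e j).intDegree ≠ 0 := by
      intro h0
      have hall : ∀ j ∈ Finset.univ, (e j).intDegree = 0 :=
        (Finset.sum_eq_zero_iff_of_nonneg fun j _ => hepos j).1 h0
      have hML : spanCols (B * Matrix.diagonal e) ≤ spanCols B := by
        refine spanCols_le_of_factor (A := Matrix.diagonal e) ?_ rfl
        intro i j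
        rw [Matrix.diagonal_apply]
        split
        · exact mem_proper.2 (le_of_eq (hall _ (Finset.mem_univ _)))
        · exact zero_mem _
      rw [← hLB, ← hMB] at hML
      exact hlt.not_ge hML
    have hge : 0 ≤ ∑ j, (e j).intDegree :=
      Finset.sum_nonneg fun j _ => hepos j
    omega
  · intro N _ hLN
    exact (sup_inf_assoc_of_le M hLN).symm
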